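/- Suppose C(t) is nonempty and convex for every t ∈ [0,T], and A₁ is coercive with modulus α₁ > 0, i.e. ⟨A₁ x, x⟩ ≥ α₁‖x‖² for all x ∈ H. If x and y are solutions of the sweeping process (P) with initial values x₀ ∈ C(0) and y₀ ∈ C(0), with Bochner-integrable derivatives v_x and v_y respectively, then for every t ∈ [0,T]: ∫₀ᵗ ‖v_x(τ) − v_y(τ)‖² dτ ≤ (‖A₀‖/(2α₁)) · ‖x₀ − y₀‖². -/

import Mathlib

open MeasureTheory Set
open scoped RealInnerProductSpace


lemma pull_out {H : Type*} [NormedAddCommGroup H] [InnerProductSpace ℝ H] [CompleteSpace H]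
    (A : H →L[ℝ] H) (g : ℝ → H) (s : Set ℝ) (hgs : IntegrableOn g s) (c : H) :
    ∫ σ in s, ⟪A (g σ), c⟫ = ⟪A (∫ σ in s, g σ), c⟫ := by
  have h1 : ∫ σ in s, ⟪A (g σ), c⟫ = ∫ σ in s, ⟪c, A (g σ)⟫ := by
    simp_rw [real_inner_comm]
  rw [h1, integral_inner (A.integrable_comp hgs) c, ← A.integral_comp_comm hgs,
    real_inner_comm]

lemma quad_identity {H : Type*} [NormedAddCommGroup H] [InnerProductSpace ℝ H] [CompleteSpace H]
    (A : H →L[ℝ] H) (hsym : ∀ x y : H, ⟪A x, y⟫ = ⟪x, A y⟫)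
    (t : ℝ) (g : ℝ → H) (hg : IntegrableOn g (Ioc 0 t)) :
    2 * (∫ τ in Ioc (0:ℝ) t, ⟪A (∫ σ in Ioc (0:ℝ) τ, g σ), g τ⟫)
      = ⟪A (∫ σ in Ioc (0:ℝ) t, g σ), ∫ σ in Ioc (0:ℝ) t, g σ⟫ := by
  set μ : Measure ℝ := volume.restrict (Ioc (0:ℝ) t) with hμ
  have hksym : ∀ a b : ℝ, ⟪A (g a), g b⟫ = ⟪A (g b), g a⟫ := by
    intro a b; rw [hsym, real_inner_comm]
  have hgασμ : AEStronglyMeasurable g μ := hg.aestronglyMeasurable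
  -- integrability of the kernel on the product
  have hK : Integrable (fun p : ℝ × ℝ => ⟪A (g p.2), g p.1⟫) (μ.prod μ) := by
    have h1 : Integrable (fun z : ℝ × ℝ => (‖A‖ * ‖g z.1‖) * ‖g z.2‖) (μ.prod μ) :=
      Integrable.mul_prod (hg.norm.const_mul ‖A‖) hg.norm
    refine h1.mono' ?_ ?_
    · exact (AEStronglyMeasurable.inner
        ((A.continuous.comp_aestronglyMeasurable (hgασμ.comp_snd (μ := μ))))
        (hgασμ.comp_fst (ν := μ)))
    · refine Filter.Eventually.of_forall fun p => ?_
      calc ‖⟪A (g p.2), g p.1⟫‖ ≤ ‖A (g p.2)‖ * ‖g p.1‖ := norm_inner_le_norm _ _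
        _ ≤ (‖A‖ * ‖g p.2‖) * ‖g p.1‖ := by gcongr; exact A.le_opNorm _
        _ = (‖A‖ * ‖g p.1‖) * ‖g p.2‖ := by ring
  -- indicator kernel
  set F : ℝ → ℝ → ℝ := fun τ σ => (Ioc (0:ℝ) τ).indicator (fun σ' => ⟪A (g σ'), g τ⟫) σ
    with hF
  have hSmeas : MeasurableSet {p : ℝ × ℝ | p.2 ∈ Ioc 0 p.1} := by
    have : {p : ℝ × ℝ | p.2 ∈ Ioc 0 p.1}
        = {p : ℝ × ℝ | (0:ℝ) < p.2} ∩ {p : ℝ × ℝ | p.2 ≤ p.1} := by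
      ext p; simp [Set.mem_Ioc, and_comm]
    rw [this]
    exact (measurableSet_lt measurable_const measurable_snd).inter
      (measurableSet_le measurable_snd measurable_fst)
  have hFunc : Function.uncurry F =
      {p : ℝ × ℝ | p.2 ∈ Ioc 0 p.1}.indicator (fun p => ⟪A (g p.2), g p.1⟫) := by
    funext p
    by_cases h : p.2 ∈ Ioc 0 p.1 <;>
      simp [Function.uncurry, F, Set.indicator, h]
  have hFint : Integrable (Function.uncurry F) (μ.prod μ) := by
    rw [hFunc]; exact hK.indicator hSmeas
  -- abbreviation for the primitive
  set W : ℝ → H := fun τ => ∫ σ in Ioc (0:ℝ) τ, g σ with hW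
  show 2 * (∫ τ in Ioc (0:ℝ) t, ⟪A (W τ), g τ⟫) = ⟪A (W t), W t⟫
  have hgsub : ∀ {τ : ℝ}, τ ≤ t → IntegrableOn g (Ioc 0 τ) :=
    fun h => hg.mono_set (Ioc_subset_Ioc_right h)
  have hgsub2 : ∀ {τ : ℝ}, 0 ≤ τ → IntegrableOn g (Ioc τ t) :=
    fun h => hg.mono_set (Ioc_subset_Ioc_left h)
  -- Claim 1 : inner integral of F
  have claim1 : ∀ τ ∈ Ioc (0:ℝ) t, ∫ σ, F τ σ ∂μ = ⟪A (W τ), g τ⟫ := by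
    intro τ hτ
    have h1 : ∫ σ, F τ σ ∂μ = ∫ σ in Ioc (0:ℝ) τ, ⟪A (g σ), g τ⟫ ∂μ :=
      integral_indicator measurableSet_Ioc
    rw [h1, hμ, Measure.restrict_restrict measurableSet_Ioc,
      Set.inter_eq_self_of_subset_left (Ioc_subset_Ioc_right hτ.2)]
    exact pull_out A g _ (hgsub hτ.2) (g τ)
  -- Claim 2 : inner integral of F in the other order
  have claim2 : ∀ σ ∈ Ioc (0:ℝ) t, ∫ τ, F τ σ ∂μ = ∫ τ in Ioc σ t, ⟪A (g σ), g τ⟫ := by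
    intro σ hσ
    have h1 : (fun τ => F τ σ) = (Ici σ).indicator (fun τ => ⟪A (g σ), g τ⟫) := by
      funext τ
      by_cases h : σ ≤ τ <;>
        simp [F, Set.indicator, Set.mem_Ioc, Set.mem_Ici, h, hσ.1]
    rw [h1, integral_indicator measurableSet_Ici, hμ,
      Measure.restrict_restrict measurableSet_Ici]
    have h2 : Ici σ ∩ Ioc 0 t = Icc σ t := by
      ext τ
      simp only [Set.mem_inter_iff, Set.mem_Ici, Set.mem_Ioc, Set.mem_Icc]
      constructor
      · rintro ⟨h1', h2', h3'⟩; exact ⟨h1', h3'⟩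
      · rintro ⟨h1', h2'⟩; exact ⟨h1', lt_of_lt_of_le hσ.1 h1', h2'⟩
    rw [h2, integral_Icc_eq_integral_Ioc]
  -- the "J" integral
  set J : ℝ := ∫ τ in Ioc (0:ℝ) t, ⟪A (W τ), g τ⟫ with hJ
  have hJ1 : J = ∫ τ, (∫ σ, F τ σ ∂μ) ∂μ :=
    (setIntegral_congr_fun measurableSet_Ioc fun τ hτ => (claim1 τ hτ).symm)
  have hswap : ∫ τ, (∫ σ, F τ σ ∂μ) ∂μ = ∫ σ, (∫ τ, F τ σ ∂μ) ∂μ :=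
    integral_integral_swap hFint
  have hJR : J = ∫ σ in Ioc (0:ℝ) t, ∫ τ in Ioc σ t, ⟪A (g σ), g τ⟫ := by
    rw [hJ1, hswap]
    exact setIntegral_congr_fun measurableSet_Ioc fun σ hσ => claim2 σ hσ
  -- full double integral
  have hfull : ∫ τ, ⟪A (W t), g τ⟫ ∂μ = ⟪A (W t), W t⟫ := integral_inner hg (A (W t))
  -- splitting of W t
  have hsplit : ∀ τ ∈ Ioc (0:ℝ) t,
      ⟪A (W t), g τ⟫ = ⟪A (W τ), g τ⟫ + ∫ σ in Ioc τ t, ⟪A (g σ), g τ⟫ := by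
    intro τ hτ
    have hWt : W t = W τ + ∫ σ in Ioc τ t, g σ := by
      rw [hW]
      simp only
      rw [← setIntegral_union (Set.Ioc_disjoint_Ioc_of_le le_rfl) measurableSet_Ioc
        (hgsub hτ.2) (hgsub2 hτ.1.le), Set.Ioc_union_Ioc_eq_Ioc hτ.1.le hτ.2]
    rw [hWt, map_add, inner_add_left, pull_out A g _ (hgsub2 hτ.1.le) (g τ)]
  -- the remainder integral, as a function of τ
  have hGint : Integrable (fun τ => ∫ σ, ⟪A (g σ), g τ⟫ ∂μ) μ := by
    have := hK.integral_prod_left (μ := μ) (ν := μ)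
    simpa using this
  have hFint2 : Integrable (fun τ => ∫ σ, F τ σ ∂μ) μ := by
    have := hFint.integral_prod_left (μ := μ) (ν := μ)
    simpa [Function.uncurry] using this
  have hdiff : ∫ τ, (∫ σ, ⟪A (g σ), g τ⟫ ∂μ) ∂μ - ∫ τ, (∫ σ, F τ σ ∂μ) ∂μ
      = ∫ τ, ((∫ σ, ⟪A (g σ), g τ⟫ ∂μ) - ∫ σ, F τ σ ∂μ) ∂μ :=
    (integral_sub hGint hFint2).symm
  -- identify the pieces
  have hfull2 : ∫ τ, (∫ σ, ⟪A (g σ), g τ⟫ ∂μ) ∂μ = ⟪A (W t), W t⟫ := by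
    rw [← hfull]
    refine setIntegral_congr_fun measurableSet_Ioc fun τ _ => ?_
    exact pull_out A g _ hg (g τ)
  have hrem : ∫ τ, ((∫ σ, ⟪A (g σ), g τ⟫ ∂μ) - ∫ σ, F τ σ ∂μ) ∂μ
      = ∫ τ in Ioc (0:ℝ) t, ∫ σ in Ioc τ t, ⟪A (g σ), g τ⟫ := by
    refine setIntegral_congr_fun measurableSet_Ioc fun τ hτ => ?_
    have h1 : ∫ σ, ⟪A (g σ), g τ⟫ ∂μ = ⟪A (W t), g τ⟫ := pull_out A g _ hg (g τ)
    rw [h1, claim1 τ hτ, hsplit τ hτ]; ring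
  -- symmetry : the remainder equals J
  have hsym2 : ∫ τ in Ioc (0:ℝ) t, (∫ σ in Ioc τ t, ⟪A (g σ), g τ⟫)
      = ∫ σ in Ioc (0:ℝ) t, ∫ τ in Ioc σ t, ⟪A (g σ), g τ⟫ := by
    refine setIntegral_congr_fun measurableSet_Ioc fun a _ => ?_
    rw [show (fun σ => ⟪A (g σ), g a⟫) = (fun σ => ⟪A (g a), g σ⟫) from
      funext fun σ => hksym σ a]
  rw [hfull2, ← hJ1, hrem, hsym2, ← hJR] at hdiff
  linarith [hdiff]

lemma alg_ineq {H : Type*} [NormedAddCommGroup H] [InnerProductSpace ℝ H]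
    (A₀ A₁ : H →L[ℝ] H) (a b X Y F : H)
    (h1 : 0 ≤ ⟪A₁ a + A₀ X - F, b - a⟫) (h2 : 0 ≤ ⟪A₁ b + A₀ Y - F, a - b⟫) :
    ⟪A₁ (a - b), a - b⟫ + ⟪A₀ (X - Y), a - b⟫ ≤ 0 := by
  have e1 : ⟪A₁ a + A₀ X - F, b - a⟫ + ⟪A₁ b + A₀ Y - F, a - b⟫
      = -(⟪A₁ (a - b), a - b⟫ + ⟪A₀ (X - Y), a - b⟫) := by
    simp only [map_sub, inner_sub_left, inner_add_left, inner_sub_right]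
    ring
  linarith

/-- `u` (with Bochner-integrable derivative `v`) is a solution of the sweeping process (P)
with velocity constraint `C`, data `A₀, A₁, f`, and initial value `u₀` on `[0,T]`. -/
def SweepSol {H : Type*} [NormedAddCommGroup H] [InnerProductSpace ℝ H]
    (T : ℝ) (A₀ A₁ : H →L[ℝ] H) (f : ℝ → H) (C : ℝ → Set H)
    (u₀ : H) (u v : ℝ → H) : Prop :=
  IntegrableOn v (Icc 0 T) ∧
  (∀ t ∈ Icc (0:ℝ) T, u t = u₀ + ∫ τ in (0:ℝ)..t, v τ) ∧
  (∀ᵐ t ∂(volume.restrict (Icc (0:ℝ) T)),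
    v t ∈ C t ∧ ∀ z ∈ C t, 0 ≤ ⟪A₁ (v t) + A₀ (u t) - f t, z - v t⟫)

theorem derivative_L2_estimate_A1_coercive
    {H : Type*} [NormedAddCommGroup H] [InnerProductSpace ℝ H] [CompleteSpace H]
    (T : ℝ) (hT : 0 < T) (A₀ A₁ : H →L[ℝ] H)
    (hA₀sym : ∀ x y : H, ⟪A₀ x, y⟫ = ⟪x, A₀ y⟫)
    (hA₁sym : ∀ x y : H, ⟪A₁ x, y⟫ = ⟪x, A₁ y⟫)
    (hA₀pos : ∀ x : H, 0 ≤ ⟪A₀ x, x⟫)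
    (hA₁pos : ∀ x : H, 0 ≤ ⟪A₁ x, x⟫)
    (f : ℝ → H) (hf : ContinuousOn f (Icc 0 T))
    (C : ℝ → Set H)
    (hC : ∀ t ∈ Icc (0:ℝ) T, (C t).Nonempty ∧ Convex ℝ (C t))
    (α₁ : ℝ) (hα₁ : 0 < α₁)
    (hcoer : ∀ x : H, α₁ * ‖x‖ ^ 2 ≤ ⟪A₁ x, x⟫)
    (x₀ y₀ : H) (hx₀ : x₀ ∈ C 0) (hy₀ : y₀ ∈ C 0)
    (x y vx vy : ℝ → H)
    (hx : SweepSol T A₀ A₁ f C x₀ x vx)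
    (hy : SweepSol T A₀ A₁ f C y₀ y vy) :
    ∀ t ∈ Icc (0:ℝ) T,
      (∫ τ in (0:ℝ)..t, ‖vx τ - vy τ‖ ^ 2) ≤ ‖A₀‖ / (2 * α₁) * ‖x₀ - y₀‖ ^ 2 := by
  obtain ⟨hvx, hxeq, hxae⟩ := hx
  obtain ⟨hvy, hyeq, hyae⟩ := hy
  set g : ℝ → H := fun τ => vx τ - vy τ with hgdef
  set w₀ : H := x₀ - y₀ with hw₀def
  set W : ℝ → H := fun τ => ∫ σ in Ioc (0:ℝ) τ, g σ with hWdef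
  have hgint : IntegrableOn g (Icc 0 T) := hvx.sub hvy
  -- the difference of trajectories
  have h_w : ∀ τ ∈ Icc (0:ℝ) T, x τ - y τ = w₀ + W τ := by
    intro τ hτ
    have hvxi : IntervalIntegrable vx volume 0 τ := by
      apply IntegrableOn.intervalIntegrable
      rw [uIcc_of_le hτ.1]
      exact hvx.mono_set (Icc_subset_Icc_right hτ.2)
    have hvyi : IntervalIntegrable vy volume 0 τ := by
      apply IntegrableOn.intervalIntegrable
      rw [uIcc_of_le hτ.1]
      exact hvy.mono_set (Icc_subset_Icc_right hτ.2)
    rw [hxeq τ hτ, hyeq τ hτ, hWdef]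
    simp only
    rw [add_sub_add_comm, ← intervalIntegral.integral_sub hvxi hvyi,
      intervalIntegral.integral_of_le hτ.1]
  -- the key a.e. inequality
  have hae : ∀ᵐ τ ∂(volume.restrict (Icc (0:ℝ) T)),
      α₁ * ‖g τ‖ ^ 2 ≤ -⟪A₀ (x τ - y τ), g τ⟫ := by
    filter_upwards [hxae, hyae] with τ hx' hy'
    obtain ⟨hmemx, hineqx⟩ := hx'
    obtain ⟨hmemy, hineqy⟩ := hy'
    have halg := alg_ineq A₀ A₁ (vx τ) (vy τ) (x τ) (y τ) (f τ)
      (hineqx _ hmemy) (hineqy _ hmemx)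
    have hc := hcoer (vx τ - vy τ)
    have hg' : g τ = vx τ - vy τ := rfl
    rw [hg']
    linarith
  -- uniform bound on the difference of trajectories
  set M : ℝ := ‖w₀‖ + ∫ σ in Icc (0:ℝ) T, ‖g σ‖ with hMdef
  have hM0 : 0 ≤ M := by
    have : 0 ≤ ∫ σ in Icc (0:ℝ) T, ‖g σ‖ :=
      integral_nonneg fun σ => norm_nonneg _
    positivity
  have hM : ∀ τ ∈ Icc (0:ℝ) T, ‖w₀ + W τ‖ ≤ M := by
    intro τ hτ
    refine (norm_add_le _ _).trans ?_
    rw [hMdef]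
    gcongr
    calc ‖W τ‖ ≤ ∫ σ in Ioc (0:ℝ) τ, ‖g σ‖ := norm_integral_le_integral_norm _
      _ ≤ ∫ σ in Icc (0:ℝ) T, ‖g σ‖ := by
          apply setIntegral_mono_set hgint.norm
          · exact Filter.Eventually.of_forall fun σ => norm_nonneg _
          · exact HasSubset.Subset.eventuallyLE
              ((Ioc_subset_Icc_self).trans (Icc_subset_Icc_right hτ.2))
  set K : ℝ := ‖A₀‖ * M / α₁ with hKdef
  have hK0 : 0 ≤ K := by positivity
  -- a.e. bound on the norm of g
  have haeK : ∀ᵐ τ ∂(volume.restrict (Icc (0:ℝ) T)), ‖g τ‖ ≤ K := by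
    filter_upwards [hae, ae_restrict_mem measurableSet_Icc] with τ h hmem
    have hw := h_w τ hmem
    have h2 : -⟪A₀ (x τ - y τ), g τ⟫ ≤ ‖A₀‖ * M * ‖g τ‖ := by
      have hb : ‖A₀ (x τ - y τ)‖ ≤ ‖A₀‖ * M := by
        calc ‖A₀ (x τ - y τ)‖ ≤ ‖A₀‖ * ‖x τ - y τ‖ := A₀.le_opNorm _
          _ ≤ ‖A₀‖ * M := by
              gcongr
              rw [hw]; exact hM τ hmem
      calc -⟪A₀ (x τ - y τ), g τ⟫ ≤ ‖⟪A₀ (x τ - y τ), g τ⟫‖ := neg_le_abs _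
        _ ≤ ‖A₀ (x τ - y τ)‖ * ‖g τ‖ := norm_inner_le_norm _ _
        _ ≤ ‖A₀‖ * M * ‖g τ‖ := by gcongr
    have h3 : α₁ * ‖g τ‖ ^ 2 ≤ ‖A₀‖ * M * ‖g τ‖ := le_trans h h2
    rcases eq_or_lt_of_le (norm_nonneg (g τ)) with h0 | h0
    · rw [← h0]; exact hK0
    · rw [hKdef, le_div_iff₀ hα₁]
      nlinarith
  -- integrability of ‖g‖²
  haveI hfin : IsFiniteMeasure (volume.restrict (Icc (0:ℝ) T)) :=
    ⟨by rw [Measure.restrict_apply_univ]; exact measure_Icc_lt_top⟩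
  have hg2int : IntegrableOn (fun τ => ‖g τ‖ ^ 2) (Icc 0 T) := by
    refine Integrable.mono' (integrable_const (K ^ 2)) ?_ ?_
    · have := (hgint.aestronglyMeasurable.norm).pow 2
      exact this
    · filter_upwards [haeK] with τ h
      rw [Real.norm_eq_abs, abs_of_nonneg (by positivity)]
      exact pow_le_pow_left₀ (norm_nonneg _) h 2
  -- continuity of W on [0,T], and integrability of the inner-product integrand
  have hWcont : ContinuousOn W (Icc 0 T) :=
    intervalIntegral.continuousOn_primitive hgint
  have hφcont : ContinuousOn (fun τ => A₀ (w₀ + W τ)) (Icc 0 T) :=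
    A₀.continuous.comp_continuousOn (continuousOn_const.add hWcont)
  have hφint : IntegrableOn (fun τ => ⟪A₀ (w₀ + W τ), g τ⟫) (Icc 0 T) := by
    refine Integrable.mono' ((hgint.norm.const_mul (‖A₀‖ * M))) ?_ ?_
    · exact AEStronglyMeasurable.inner
        (hφcont.aestronglyMeasurable measurableSet_Icc)
        hgint.aestronglyMeasurable
    · filter_upwards [ae_restrict_mem measurableSet_Icc] with τ hmem
      calc ‖⟪A₀ (w₀ + W τ), g τ⟫‖ ≤ ‖A₀ (w₀ + W τ)‖ * ‖g τ‖ := norm_inner_le_norm _ _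
        _ ≤ ‖A₀‖ * M * ‖g τ‖ := by
            gcongr
            calc ‖A₀ (w₀ + W τ)‖ ≤ ‖A₀‖ * ‖w₀ + W τ‖ := A₀.le_opNorm _
              _ ≤ ‖A₀‖ * M := by gcongr; exact hM τ hmem
  -- now fix t
  intro t ht
  obtain ⟨ht0, htT⟩ := ht
  have hsub : Ioc (0:ℝ) t ⊆ Icc 0 T :=
    (Ioc_subset_Icc_self).trans (Icc_subset_Icc_right htT)
  have hgS : IntegrableOn g (Ioc 0 t) := hgint.mono_set hsub
  have hg2S : IntegrableOn (fun τ => ‖g τ‖ ^ 2) (Ioc 0 t) := hg2int.mono_set hsub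
  have hφS : IntegrableOn (fun τ => ⟪A₀ (w₀ + W τ), g τ⟫) (Ioc 0 t) := hφint.mono_set hsub
  -- rewrite goal as set integral
  rw [intervalIntegral.integral_of_le ht0]
  have hgoal_eq : (fun τ => ‖vx τ - vy τ‖ ^ 2) = fun τ => ‖g τ‖ ^ 2 := rfl
  -- Step 1
  have step1 : α₁ * ∫ τ in Ioc (0:ℝ) t, ‖g τ‖ ^ 2
      ≤ ∫ τ in Ioc (0:ℝ) t, -⟪A₀ (w₀ + W τ), g τ⟫ := by
    rw [← integral_const_mul]
    refine integral_mono_ae (hg2S.const_mul α₁) hφS.neg ?_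
    have h1 : ∀ᵐ τ ∂(volume.restrict (Ioc (0:ℝ) t)),
        α₁ * ‖g τ‖ ^ 2 ≤ -⟪A₀ (x τ - y τ), g τ⟫ :=
      ae_restrict_of_ae_restrict_of_subset hsub hae
    filter_upwards [h1, ae_restrict_mem measurableSet_Ioc] with τ h hmem
    have hw := h_w τ (hsub hmem)
    rw [← hw]
    exact h
  -- Step 2 : the integral identity
  have part1int : IntegrableOn (fun τ => ⟪A₀ w₀, g τ⟫) (Ioc 0 t) := by
    refine Integrable.mono' (hgS.norm.const_mul ‖A₀ w₀‖) ?_ ?_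
    · exact AEStronglyMeasurable.inner aestronglyMeasurable_const hgS.aestronglyMeasurable
    · exact Filter.Eventually.of_forall fun τ => norm_inner_le_norm _ _
  have part2int : IntegrableOn (fun τ => ⟪A₀ (W τ), g τ⟫) (Ioc 0 t) := by
    have h := hφS.sub part1int
    refine h.congr ?_
    refine Filter.Eventually.of_forall fun τ => ?_
    simp only [Pi.sub_apply, map_add, inner_add_left]
    ring
  have hpart1 : ∫ τ in Ioc (0:ℝ) t, ⟪A₀ w₀, g τ⟫ = ⟪A₀ w₀, W t⟫ :=
    integral_inner hgS (A₀ w₀)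
  have hpart2 : 2 * (∫ τ in Ioc (0:ℝ) t, ⟪A₀ (W τ), g τ⟫) = ⟪A₀ (W t), W t⟫ :=
    quad_identity A₀ hA₀sym t g hgS
  have step2 : ∫ τ in Ioc (0:ℝ) t, ⟪A₀ (w₀ + W τ), g τ⟫
      = ⟪A₀ w₀, W t⟫ + (∫ τ in Ioc (0:ℝ) t, ⟪A₀ (W τ), g τ⟫) := by
    rw [← hpart1, ← integral_add part1int part2int]
    refine setIntegral_congr_fun measurableSet_Ioc fun τ _ => ?_
    simp only [map_add, inner_add_left]
  -- Step 3 : positivity of the quadratic form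
  have step3 : -(⟪A₀ w₀, W t⟫ + (1/2) * ⟪A₀ (W t), W t⟫) ≤ (1/2) * ⟪A₀ w₀, w₀⟫ := by
    have hpos := hA₀pos (w₀ + W t)
    have hcross : ⟪A₀ (W t), w₀⟫ = ⟪A₀ w₀, W t⟫ := by
      rw [hA₀sym, real_inner_comm]
    have hexp : ⟪A₀ (w₀ + W t), w₀ + W t⟫
        = ⟪A₀ w₀, w₀⟫ + 2 * ⟪A₀ w₀, W t⟫ + ⟪A₀ (W t), W t⟫ := by
      simp only [map_add, inner_add_left, inner_add_right]
      rw [hcross]; ring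
    rw [hexp] at hpos
    linarith
  -- Step 4 : the norm bound
  have step4 : ⟪A₀ w₀, w₀⟫ ≤ ‖A₀‖ * ‖w₀‖ ^ 2 := by
    calc ⟪A₀ w₀, w₀⟫ ≤ ‖A₀ w₀‖ * ‖w₀‖ := real_inner_le_norm _ _
      _ ≤ (‖A₀‖ * ‖w₀‖) * ‖w₀‖ := by gcongr; exact A₀.le_opNorm _
      _ = ‖A₀‖ * ‖w₀‖ ^ 2 := by ring
  -- assemble
  have hneg : ∫ τ in Ioc (0:ℝ) t, -⟪A₀ (w₀ + W τ), g τ⟫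
      = -(⟪A₀ w₀, W t⟫ + (1/2) * ⟪A₀ (W t), W t⟫) := by
    rw [integral_neg, step2]
    linarith [hpart2]
  have hchain : α₁ * ∫ τ in Ioc (0:ℝ) t, ‖g τ‖ ^ 2 ≤ (1/2) * (‖A₀‖ * ‖w₀‖ ^ 2) := by
    rw [hneg] at step1
    linarith
  have hfinal : ∫ τ in Ioc (0:ℝ) t, ‖g τ‖ ^ 2 ≤ ‖A₀‖ / (2 * α₁) * ‖w₀‖ ^ 2 := by
    rw [div_mul_eq_mul_div, le_div_iff₀ (by positivity)]
    nlinarith [hchain]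
  exact hfinal
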